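/- Let n ≥ 1 and let K := Sp_{2n}(ℝ) ∩ O_{2n}(ℝ) (the standard maximal compact subgroup). For g, h ∈ Sp_{2n}(ℝ), one has ‖Pl(g)‖ = ‖Pl(h)‖ if and only if there exist q ∈ [P,P](ℝ) and k ∈ K such that g = q·h·k. (Proposition 2.3, Archimedean case: the map X(ℝ)/K → ℝ_{>0}, [P,P](ℝ)gK ↦ ‖Pl(g)‖, is a well-defined injection.) -/

import Mathlib

open Matrix

/-- The standard symplectic structure matrix `J = (0, Iₙ; -Iₙ, 0)`. -/
def Jmat (F : Type*) [Field F] (n : ℕ) : Matrix (Fin n ⊕ Fin n) (Fin n ⊕ Fin n) F :=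
  Matrix.fromBlocks 0 1 (-1) 0

/-- `Sp_{2n}(F) = {g : g * J⁻¹ * gᵀ * J = 1}`. -/
def Sp (F : Type*) [Field F] (n : ℕ) : Set (Matrix (Fin n ⊕ Fin n) (Fin n ⊕ Fin n) F) :=
  {g | g * (Jmat F n)⁻¹ * gᵀ * Jmat F n = 1}

/-- `[P,P](F)`: elements of `Sp_{2n}(F)` of block form `(A, B; 0, (Aᵀ)⁻¹)` with `det A = 1`. -/
def SiegelPP (F : Type*) [Field F] (n : ℕ) :
    Set (Matrix (Fin n ⊕ Fin n) (Fin n ⊕ Fin n) F) :=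
  {g | g ∈ Sp F n ∧ ∃ A B : Matrix (Fin n) (Fin n) F,
    g = Matrix.fromBlocks A B 0 Aᵀ⁻¹ ∧ A.det = 1}

/-- The Plücker map: the wedge product (in the `n`-th exterior power of the space of row
vectors `F^{2n}`) of the last `n` rows of `g`, from top to bottom. -/
noncomputable def Pl (F : Type*) [Field F] (n : ℕ)
    (g : Matrix (Fin n ⊕ Fin n) (Fin n ⊕ Fin n) F) :
    ExteriorAlgebra F ((Fin n ⊕ Fin n) → F) :=
  ExteriorAlgebra.ιMulti F n (fun i => g (Sum.inr i))

/-- The `j`-th element (in increasing order, with the standard identification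
`Fin n ⊕ Fin n ≅ Fin 2n`) of a subset `s` of the index set of size `n`. -/
noncomputable def colsOf (n : ℕ) (s : Finset (Fin n ⊕ Fin n)) (hs : s.card = n) :
    Fin n → Fin n ⊕ Fin n := fun j =>
  finSumFinEquiv.symm
    (((s.image finSumFinEquiv).orderIsoOfFin
      (by rw [Finset.card_image_of_injective _ finSumFinEquiv.injective, hs]) j : Fin (n + n)))

/-- The coordinate functional on `⋀ⁿ F^{2n}` dual to the standard basis vector
`e_{α₁} ∧ ⋯ ∧ e_{αₙ}` where `s = {α₁ < ⋯ < αₙ}`. -/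
noncomputable def detCoord (F : Type*) [Field F] (n : ℕ) (s : Finset (Fin n ⊕ Fin n))
    (hs : s.card = n) : ExteriorAlgebra F ((Fin n ⊕ Fin n) → F) →ₗ[F] F :=
  ExteriorAlgebra.liftAlternating fun i =>
    if h : i = n then
      ((Matrix.detRowAlternating).compLinearMap
        (LinearMap.funLeft F F (colsOf n s hs))).domDomCongr (finCongr h.symm)
    else 0

/-- The Euclidean norm `‖x‖ = (Σₐ xₐ²)^{1/2}` of an element of `⋀ⁿ ℝ^{2n}`, computed in the
standard induced basis. -/
noncomputable def realWedgeNorm (n : ℕ)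
    (x : ExteriorAlgebra ℝ ((Fin n ⊕ Fin n) → ℝ)) : ℝ :=
  Real.sqrt (∑ s : {s : Finset (Fin n ⊕ Fin n) // s.card = n}, (detCoord ℝ n s.1 s.2 x) ^ 2)

variable {F : Type*} [Field F] {n : ℕ}

lemma J_mul_J : Jmat F n * Jmat F n = -1 := by
  simp [Jmat, Matrix.fromBlocks_multiply, ← Matrix.fromBlocks_one, Matrix.fromBlocks_neg]

lemma J_mul_negJ : Jmat F n * (-Jmat F n) = 1 := by
  rw [Matrix.mul_neg, J_mul_J, neg_neg]

lemma negJ_mul_J : (-Jmat F n) * Jmat F n = 1 := by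
  rw [Matrix.neg_mul, J_mul_J, neg_neg]

lemma Jmat_inv : (Jmat F n)⁻¹ = -Jmat F n := Matrix.inv_eq_right_inv J_mul_negJ

lemma mem_Sp_iff {g : Matrix (Fin n ⊕ Fin n) (Fin n ⊕ Fin n) F} :
    g ∈ Sp F n ↔ g * Jmat F n * gᵀ = Jmat F n := by
  rw [Sp, Set.mem_setOf_eq, Jmat_inv]
  constructor
  · intro h
    have h2 : g * Jmat F n * gᵀ * (Jmat F n * -Jmat F n) =
        g * -Jmat F n * gᵀ * Jmat F n * -(-Jmat F n) := by
      simp only [Matrix.mul_neg, Matrix.neg_mul, neg_neg]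
      rw [Matrix.mul_assoc (g * Jmat F n * gᵀ)]
    rw [J_mul_negJ, Matrix.mul_one, h, neg_neg, Matrix.one_mul] at h2
    exact h2
  · intro h
    have : g * -Jmat F n * gᵀ = -(g * Jmat F n * gᵀ) := by
      rw [Matrix.mul_neg, Matrix.neg_mul]
    rw [this, h]; exact negJ_mul_J

lemma Sp_right_inv {g : Matrix (Fin n ⊕ Fin n) (Fin n ⊕ Fin n) F} (hg : g ∈ Sp F n) :
    g * (Jmat F n * gᵀ * (-Jmat F n)) = 1 := by
  have h := mem_Sp_iff.mp hg
  calc g * (Jmat F n * gᵀ * (-Jmat F n)) = g * Jmat F n * gᵀ * (-Jmat F n) := by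
        simp only [Matrix.mul_assoc]
    _ = 1 := by rw [h, J_mul_negJ]

lemma Sp_isUnit_det {g : Matrix (Fin n ⊕ Fin n) (Fin n ⊕ Fin n) F} (hg : g ∈ Sp F n) :
    IsUnit g.det := by
  have := congrArg Matrix.det (Sp_right_inv hg)
  rw [Matrix.det_mul, Matrix.det_one] at this
  exact IsUnit.of_mul_eq_one _ this

lemma Sp_mul {g h : Matrix (Fin n ⊕ Fin n) (Fin n ⊕ Fin n) F} (hg : g ∈ Sp F n)
    (hh : h ∈ Sp F n) : g * h ∈ Sp F n := by
  rw [mem_Sp_iff] at *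
  rw [Matrix.transpose_mul]
  calc g * h * Jmat F n * (hᵀ * gᵀ) = g * (h * Jmat F n * hᵀ) * gᵀ := by
        simp only [Matrix.mul_assoc]
    _ = Jmat F n := by rw [hh, hg]

lemma Sp_inv {g : Matrix (Fin n ⊕ Fin n) (Fin n ⊕ Fin n) F} (hg : g ∈ Sp F n) :
    g⁻¹ ∈ Sp F n := by
  have hu := Sp_isUnit_det hg
  have h := mem_Sp_iff.mp hg
  rw [mem_Sp_iff, Matrix.transpose_nonsing_inv]
  conv_lhs => rw [← h]
  calc g⁻¹ * (g * Jmat F n * gᵀ) * gᵀ⁻¹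
      = (g⁻¹ * g) * Jmat F n * (gᵀ * gᵀ⁻¹) := by simp only [Matrix.mul_assoc]
    _ = Jmat F n := by
        rw [Matrix.nonsing_inv_mul _ hu, Matrix.mul_nonsing_inv _ (by rwa [Matrix.det_transpose]),
          Matrix.one_mul, Matrix.mul_one]

lemma sp_block_rels {A B C D : Matrix (Fin n) (Fin n) F}
    (h : Matrix.fromBlocks A B C D ∈ Sp F n) :
    A * Bᵀ = B * Aᵀ ∧ A * Dᵀ - B * Cᵀ = 1 ∧ C * Dᵀ = D * Cᵀ := by
  have h' := mem_Sp_iff.mp h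
  rw [Jmat, Matrix.fromBlocks_transpose, Matrix.fromBlocks_multiply,
    Matrix.fromBlocks_multiply] at h'
  simp only [Matrix.mul_zero, Matrix.zero_mul, Matrix.mul_one, Matrix.mul_neg, Matrix.neg_mul,
    Matrix.one_mul, add_zero, zero_add, Matrix.mul_zero] at h'
  rw [Matrix.fromBlocks_inj] at h'
  obtain ⟨h1, h2, h3, h4⟩ := h'
  exact ⟨(neg_add_eq_zero.mp h1).symm, by rw [sub_eq_neg_add]; exact h2, (neg_add_eq_zero.mp h4).symm⟩

/-- The bottom `n × 2n` block of rows of `g`. -/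
def Mrow (g : Matrix (Fin n ⊕ Fin n) (Fin n ⊕ Fin n) F) : Matrix (Fin n) (Fin n ⊕ Fin n) F :=
  g.submatrix Sum.inr id

lemma Mrow_eq_fromColumns (g : Matrix (Fin n ⊕ Fin n) (Fin n ⊕ Fin n) F) :
    Mrow g = Matrix.fromCols g.toBlocks₂₁ g.toBlocks₂₂ := by
  ext i j
  cases j <;> rfl

lemma Mrow_mul (g k : Matrix (Fin n ⊕ Fin n) (Fin n ⊕ Fin n) F) :
    Mrow (g * k) = Mrow g * k := by
  ext i j
  simp [Mrow, Matrix.mul_apply]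

lemma Mrow_fromBlocks_mul (A B E : Matrix (Fin n) (Fin n) F)
    (X : Matrix (Fin n ⊕ Fin n) (Fin n ⊕ Fin n) F) :
    Mrow (Matrix.fromBlocks A B 0 E * X) = E * Mrow X := by
  ext i j
  simp [Mrow, Matrix.mul_apply, Fintype.sum_sum_type]

lemma sp_block_triangular {A B E : Matrix (Fin n) (Fin n) F}
    (h : Matrix.fromBlocks A B 0 E ∈ Sp F n) : A * Eᵀ = 1 ∧ E = Aᵀ⁻¹ := by
  obtain ⟨-, h2, -⟩ := sp_block_rels h
  rw [Matrix.transpose_zero, Matrix.mul_zero, sub_zero] at h2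
  refine ⟨h2, ?_⟩
  have : A⁻¹ = Eᵀ := Matrix.inv_eq_right_inv h2
  rw [← Matrix.transpose_nonsing_inv, this, Matrix.transpose_transpose]

lemma sp_siegel_form {p : Matrix (Fin n ⊕ Fin n) (Fin n ⊕ Fin n) F} (hp : p ∈ Sp F n)
    (h21 : p.toBlocks₂₁ = 0) :
    p = Matrix.fromBlocks p.toBlocks₁₁ p.toBlocks₁₂ 0 p.toBlocks₁₁ᵀ⁻¹ ∧
      p.toBlocks₁₁ * p.toBlocks₂₂ᵀ = 1 := by
  have hfb : p = Matrix.fromBlocks p.toBlocks₁₁ p.toBlocks₁₂ 0 p.toBlocks₂₂ := by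
    rw [← h21, Matrix.fromBlocks_toBlocks]
  have h' := hp
  rw [hfb] at h'
  obtain ⟨h1, h2⟩ := sp_block_triangular h'
  exact ⟨by rw [← h2, ← hfb], h1⟩

lemma mem_SiegelPP_of {p : Matrix (Fin n ⊕ Fin n) (Fin n ⊕ Fin n) F} (hp : p ∈ Sp F n)
    (h21 : p.toBlocks₂₁ = 0) (hdet : p.toBlocks₁₁.det = 1) : p ∈ SiegelPP F n :=
  ⟨hp, p.toBlocks₁₁, p.toBlocks₁₂, (sp_siegel_form hp h21).1, hdet⟩

section RealPart
variable {m : ℕ}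

lemma S_posdef {g : Matrix (Fin m ⊕ Fin m) (Fin m ⊕ Fin m) ℝ} (hg : g ∈ Sp ℝ m) :
    (Mrow g * (Mrow g)ᵀ).PosDef := by
  rw [Matrix.posDef_iff_dotProduct_mulVec]
  constructor
  · rw [Matrix.IsHermitian, Matrix.conjTranspose_eq_transpose_of_trivial, Matrix.transpose_mul,
      Matrix.transpose_transpose]
  · intro x hx
    have hy : x ᵥ* Mrow g ≠ 0 := by
      intro h0
      have hgu : IsUnit g.det := Sp_isUnit_det hg
      have hz : (Sum.elim 0 x) ᵥ* g = 0 := by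
        funext j
        have h1 : ((Sum.elim (0 : Fin m → ℝ) x) ᵥ* g) j = ∑ i, x i * g (Sum.inr i) j := by
          simp [Matrix.vecMul, dotProduct, Fintype.sum_sum_type]
        have h2 := congrFun h0 j
        simp only [Matrix.vecMul, dotProduct, Mrow, Matrix.submatrix_apply, id_eq,
          Pi.zero_apply] at h2
        rw [h1, Pi.zero_apply, ← h2]
      have hz2 : Sum.elim (0 : Fin m → ℝ) x = 0 := by
        have := congrArg (· ᵥ* g⁻¹) hz
        simpa [Matrix.vecMul_vecMul, Matrix.mul_nonsing_inv _ hgu] using this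
      exact hx (funext fun i => congrFun hz2 (Sum.inr i))
    have key : x ⬝ᵥ ((Mrow g * (Mrow g)ᵀ) *ᵥ x) = (x ᵥ* Mrow g) ⬝ᵥ (x ᵥ* Mrow g) := by
      rw [← Matrix.mulVec_mulVec, Matrix.dotProduct_mulVec, Matrix.mulVec_transpose]
    simp only [star_trivial]
    rw [key]
    have := Matrix.dotProduct_self_star_pos_iff (v := x ᵥ* Mrow g)
    simp only [star_trivial] at this
    exact this.mpr hy

open scoped MatrixOrder in
lemma iwasawa {g : Matrix (Fin m ⊕ Fin m) (Fin m ⊕ Fin m) ℝ} (hg : g ∈ Sp ℝ m) :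
    ∃ p k : Matrix (Fin m ⊕ Fin m) (Fin m ⊕ Fin m) ℝ,
      p ∈ Sp ℝ m ∧ p.toBlocks₂₁ = 0 ∧
      p.toBlocks₁₁.det = (Real.sqrt (Mrow g * (Mrow g)ᵀ).det)⁻¹ ∧
      k ∈ Sp ℝ m ∧ k * kᵀ = 1 ∧ g = p * k := by
  set S := Mrow g * (Mrow g)ᵀ with hSdef
  have hS : S.PosDef := S_posdef hg
  set R := CFC.sqrt S with hRdef
  have hRR : R * R = S := CFC.sqrt_mul_sqrt_self S (Matrix.nonneg_iff_posSemidef.mpr hS.posSemidef)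
  have hRsym : Rᵀ = R := by
    have h := (Matrix.nonneg_iff_posSemidef.mp (CFC.sqrt_nonneg S)).1
    rwa [Matrix.IsHermitian, Matrix.conjTranspose_eq_transpose_of_trivial] at h
  have hdetR_sq : R.det * R.det = S.det := by rw [← Matrix.det_mul, hRR]
  have hdetR_nonneg : 0 ≤ R.det := by
    rw [(Matrix.nonneg_iff_posSemidef.mp (CFC.sqrt_nonneg S)).1.det_eq_prod_eigenvalues]
    exact Finset.prod_nonneg fun i _ => by
      simpa using (Matrix.nonneg_iff_posSemidef.mp (CFC.sqrt_nonneg S)).eigenvalues_nonneg i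
  have hdetS_pos : 0 < S.det := hS.det_pos
  have hdetR_pos : 0 < R.det := by
    rcases hdetR_nonneg.lt_or_eq with h | h
    · exact h
    · exfalso; rw [← h] at hdetR_sq; simp at hdetR_sq; linarith
  have hdetR : R.det = Real.sqrt S.det := by
    rw [← hdetR_sq, Real.sqrt_mul_self hdetR_nonneg]
  have hRu : IsUnit R.det := hdetR_pos.ne'.isUnit
  set T := R⁻¹ with hTdef
  have hTsym : Tᵀ = T := by rw [hTdef, Matrix.transpose_nonsing_inv, hRsym]
  have hTR : T * R = 1 := Matrix.nonsing_inv_mul _ hRu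
  have hRT : R * T = 1 := Matrix.mul_nonsing_inv _ hRu
  set C := g.toBlocks₂₁ with hCdef
  set D := g.toBlocks₂₂ with hDdef
  have hMrow : Mrow g = Matrix.fromCols C D := Mrow_eq_fromColumns g
  have hCD : C * Dᵀ = D * Cᵀ := by
    have h := hg
    rw [← Matrix.fromBlocks_toBlocks g] at h
    exact (sp_block_rels h).2.2
  have hSblocks : S = C * Cᵀ + D * Dᵀ := by
    rw [hSdef, hMrow, Matrix.transpose_fromCols, Matrix.fromCols_mul_fromRows]
  set C' := T * C with hC'def
  set D' := T * D with hD'def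
  have hTST : T * S * T = 1 := by
    rw [← hRR]
    calc T * (R * R) * T = (T * R) * (R * T) := by simp only [Matrix.mul_assoc]
      _ = 1 := by rw [hTR, hRT, Matrix.one_mul]
  have exp : ∀ X Y : Matrix (Fin m) (Fin m) ℝ, (T * X) * (T * Y)ᵀ = T * (X * Yᵀ) * T := by
    intro X Y
    rw [Matrix.transpose_mul, hTsym]
    simp only [Matrix.mul_assoc]
  have N1 : C' * C'ᵀ + D' * D'ᵀ = 1 := by
    rw [hC'def, hD'def, exp, exp, ← Matrix.add_mul, ← Matrix.mul_add, ← hSblocks, hTST]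
  have N2 : C' * D'ᵀ = D' * C'ᵀ := by rw [hC'def, hD'def, exp, exp, hCD]
  set k := Matrix.fromBlocks D' (-C') C' D' with hkdef
  have hkT : kᵀ = Matrix.fromBlocks D'ᵀ C'ᵀ (-C'ᵀ) D'ᵀ := by
    rw [hkdef, Matrix.fromBlocks_transpose, Matrix.transpose_neg]
  have e2 : D' * C'ᵀ + -C' * D'ᵀ = 0 := by
    rw [Matrix.neg_mul, ← N2, add_neg_cancel]
  have e3 : C' * D'ᵀ + D' * -C'ᵀ = 0 := by
    rw [Matrix.mul_neg, N2, add_neg_cancel]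
  have hkk : k * kᵀ = 1 := by
    rw [hkT, hkdef, Matrix.fromBlocks_multiply]
    have e1 : D' * D'ᵀ + -C' * -C'ᵀ = 1 := by
      rw [Matrix.neg_mul, Matrix.mul_neg, neg_neg, add_comm]; exact N1
    rw [e1, e2, e3, N1, ← Matrix.fromBlocks_one]
  have hkSp : k ∈ Sp ℝ m := by
    rw [mem_Sp_iff]
    have hkJ : k * Jmat ℝ m = Matrix.fromBlocks C' D' (-D') C' := by
      rw [hkdef, Jmat, Matrix.fromBlocks_multiply]
      simp only [Matrix.mul_zero, Matrix.mul_one, Matrix.mul_neg, Matrix.neg_mul, neg_neg,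
        add_zero, zero_add, neg_zero]
    rw [hkJ, hkT, Matrix.fromBlocks_multiply, Jmat]
    have f1 : -D' * D'ᵀ + C' * -C'ᵀ = -1 := by
      rw [Matrix.neg_mul, Matrix.mul_neg, ← neg_add, add_comm (D' * D'ᵀ), N1]
    have f2 : -D' * C'ᵀ + C' * D'ᵀ = 0 := by
      rw [Matrix.neg_mul, add_comm, ← N2, add_neg_cancel]
    rw [e3, N1, f1, f2]
  have hkinv : k⁻¹ = kᵀ := Matrix.inv_eq_right_inv hkk
  have hkTSp : kᵀ ∈ Sp ℝ m := hkinv ▸ Sp_inv hkSp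
  set p := g * kᵀ with hpdef
  have hpSp : p ∈ Sp ℝ m := Sp_mul hg hkTSp
  have expC : ∀ X Y : Matrix (Fin m) (Fin m) ℝ, X * (T * Y)ᵀ = (X * Yᵀ) * T := by
    intro X Y
    rw [Matrix.transpose_mul, hTsym, Matrix.mul_assoc]
  have hMrowp : Mrow p = Matrix.fromCols 0 R := by
    rw [hpdef, Mrow_mul, hMrow, hkT, Matrix.fromCols_mul_fromBlocks,
      Matrix.fromCols_ext_iff]
    constructor
    · rw [Matrix.mul_neg, hC'def, hD'def, expC, expC, hCD, add_neg_cancel]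
    · rw [hC'def, hD'def, expC, expC, ← Matrix.add_mul, ← hSblocks, ← hRR, Matrix.mul_assoc,
        hRT, Matrix.mul_one]
  have hblocks : p.toBlocks₂₁ = 0 ∧ p.toBlocks₂₂ = R :=
    Matrix.fromCols_inj ((Mrow_eq_fromColumns p).symm.trans hMrowp)
  obtain ⟨hform, hAE⟩ := sp_siegel_form hpSp hblocks.1
  have hdet11 : p.toBlocks₁₁.det = (Real.sqrt S.det)⁻¹ := by
    rw [hblocks.2, hRsym] at hAE
    have := congrArg Matrix.det hAE
    rw [Matrix.det_mul, Matrix.det_one] at this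
    rw [← hdetR]
    field_simp at this ⊢
    linarith [this]
  have hkTk : kᵀ * k = 1 := mul_eq_one_comm.mp hkk
  refine ⟨p, k, hpSp, hblocks.1, hdet11, hkSp, hkk, ?_⟩
  rw [hpdef, Matrix.mul_assoc, hkTk, Matrix.mul_one]
end RealPart

section CauchyBinet
variable {X : Type*} [Fintype X] [DecidableEq X] {m : ℕ}

lemma det_mul_expand {Y : Type*} [Fintype Y] [DecidableEq Y]
    (N : Matrix (Fin m) Y ℝ) (P : Matrix Y (Fin m) ℝ) :
    (N * P).det = ∑ p : Fin m → Y, ∑ σ : Equiv.Perm (Fin m),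
      (Equiv.Perm.sign σ : ℝ) * ∏ i, N (σ i) (p i) * P (p i) i := by
  simp only [Matrix.det_apply', Matrix.mul_apply, Finset.prod_univ_sum, Finset.mul_sum,
    Fintype.piFinset_univ]
  rw [Finset.sum_comm]

lemma cb_aux {Y : Type*} [Fintype Y] [DecidableEq Y]
    {N : Matrix (Fin m) Y ℝ} {P : Matrix Y (Fin m) ℝ} {p : Fin m → Y}
    (H : ¬Function.Injective p) :
    (∑ σ : Equiv.Perm (Fin m), (Equiv.Perm.sign σ : ℝ) * ∏ x, N (σ x) (p x) * P (p x) x) = 0 := by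
  obtain ⟨i, j, hpij, hij⟩ : ∃ i j, p i = p j ∧ i ≠ j := by
    rw [Function.Injective] at H
    push_neg at H
    obtain ⟨i, j, h1, h2⟩ := H
    exact ⟨i, j, h1, h2⟩
  exact Finset.sum_involution (fun σ _ => σ * Equiv.swap i j)
    (fun σ _ => by
      have : (∏ x, N (σ x) (p x)) = ∏ x, N ((σ * Equiv.swap i j) x) (p x) :=
        Fintype.prod_equiv (Equiv.swap i j) _ _ (by simp [Equiv.apply_swap_eq_self hpij])
      simp [this, Equiv.Perm.sign_swap hij, -Equiv.Perm.sign_swap', Finset.prod_mul_distrib])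
    (fun σ _ _ => (not_congr Equiv.mul_swap_eq_iff).mpr hij) (fun _ _ => Finset.mem_univ _)
    fun σ _ => Equiv.mul_swap_involutive i j σ

lemma det_mul_expand_inj {Y : Type*} [Fintype Y] [DecidableEq Y]
    (N : Matrix (Fin m) Y ℝ) (P : Matrix Y (Fin m) ℝ) :
    (N * P).det = ∑ p ∈ Finset.univ.filter (fun p : Fin m → Y => Function.Injective p),
      ∑ σ : Equiv.Perm (Fin m),
      (Equiv.Perm.sign σ : ℝ) * ∏ i, N (σ i) (p i) * P (p i) i := by
  rw [det_mul_expand]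
  refine (Finset.sum_subset (Finset.filter_subset _ _) fun p _ hp => cb_aux ?_).symm
  simpa using hp

section CB
variable (c : ∀ s : Finset X, s.card = m → (Fin m → X))
  (hinj : ∀ s hs, Function.Injective (c s hs))
  (hmem : ∀ s hs i, c s hs i ∈ s)

include hinj hmem in
lemma image_c (s : Finset X) (hs : s.card = m) : Finset.image (c s hs) Finset.univ = s := by
  apply Finset.eq_of_subset_of_card_le
  · intro x hx
    obtain ⟨i, -, rfl⟩ := Finset.mem_image.mp hx
    exact hmem s hs i
  · rw [Finset.card_image_of_injective _ (hinj s hs), Finset.card_univ, Fintype.card_fin, hs]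

lemma card_image' (p : Fin m → X) (hp : Function.Injective p) :
    (Finset.image p Finset.univ).card = m := by
  rw [Finset.card_image_of_injective _ hp, Finset.card_univ, Fintype.card_fin]

/-- The enumeration `c s hs` as an equivalence `Fin m ≃ s`. -/
noncomputable def cEquiv (s : Finset X) (hs : s.card = m) : Fin m ≃ {x // x ∈ s} :=
  Equiv.ofBijective (fun i => ⟨c s hs i, hmem s hs i⟩)
    ((Fintype.bijective_iff_injective_and_card _).mpr
      ⟨fun i j h => hinj s hs (congrArg Subtype.val h), by simp [hs]⟩)

lemma cEquiv_apply_symm (s : Finset X) (hs : s.card = m) (x : X) (hx : x ∈ s) :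
    c s hs ((cEquiv c hinj hmem s hs).symm ⟨x, hx⟩) = x :=
  congrArg Subtype.val ((cEquiv c hinj hmem s hs).apply_symm_apply ⟨x, hx⟩)

/-- The permutation-like index map comparing an injective `p` with the enumeration of its image. -/
noncomputable def qOf (p : Fin m → X) (hp : Function.Injective p) : Fin m → Fin m :=
  fun i => (cEquiv c hinj hmem (Finset.image p Finset.univ) (card_image' p hp)).symm
    ⟨p i, Finset.mem_image_of_mem p (Finset.mem_univ i)⟩

lemma c_qOf (p : Fin m → X) (hp : Function.Injective p) (i : Fin m) :
    c (Finset.image p Finset.univ) (card_image' p hp) (qOf c hinj hmem p hp i) = p i :=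
  cEquiv_apply_symm c hinj hmem _ _ (p i) _

lemma c_proof_irrel {s s' : Finset X} (e : s' = s) (h' : s'.card = m) (hs : s.card = m) :
    c s' h' = c s hs := by subst e; rfl

include hinj hmem in
theorem cauchy_binet (N : Matrix (Fin m) X ℝ) (P : Matrix X (Fin m) ℝ) :
    (N * P).det = ∑ s : {s : Finset X // s.card = m},
      (N.submatrix id (c s.1 s.2)).det * (P.submatrix (c s.1 s.2) id).det := by
  classical
  have hdetpair : ∀ s : {s : Finset X // s.card = m},
      (N.submatrix id (c s.1 s.2)).det * (P.submatrix (c s.1 s.2) id).det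
      = ∑ q ∈ Finset.univ.filter (fun q : Fin m → Fin m => Function.Injective q),
          ∑ σ : Equiv.Perm (Fin m),
          (Equiv.Perm.sign σ : ℝ) * ∏ i, N (σ i) (c s.1 s.2 (q i)) * P (c s.1 s.2 (q i)) i := by
    intro s
    rw [← Matrix.det_mul, det_mul_expand_inj]
    rfl
  rw [det_mul_expand_inj]
  simp_rw [hdetpair]
  conv_rhs => rw [← Finset.sum_product']
  refine Finset.sum_bij'
    (i := fun (p : Fin m → X) (hp : p ∈ Finset.univ.filter fun p => Function.Injective p) =>
      ((⟨Finset.image p Finset.univ, card_image' p (by simpa using hp)⟩ :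
          {s : Finset X // s.card = m}),
        qOf c hinj hmem p (by simpa using hp)))
    (j := fun x _ => c x.1.1 x.1.2 ∘ x.2) ?_ ?_ ?_ ?_ ?_
  · -- i maps into the product set
    intro p hp
    have hpinj : Function.Injective p := by simpa using hp
    rw [Finset.mem_product]
    refine ⟨Finset.mem_univ _, Finset.mem_filter.mpr ⟨Finset.mem_univ _, fun a b hab => ?_⟩⟩
    apply hpinj
    rw [← c_qOf c hinj hmem p hpinj a, ← c_qOf c hinj hmem p hpinj b]
    exact congrArg _ hab
  · -- j maps into the filter set
    intro x hx
    rw [Finset.mem_product, Finset.mem_filter] at hx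
    exact Finset.mem_filter.mpr ⟨Finset.mem_univ _, (hinj _ _).comp hx.2.2⟩
  · -- left inverse : j (i p) = p
    intro p hp
    funext i
    exact c_qOf c hinj hmem p (by simpa using hp) i
  · -- right inverse : i (j x) = x
    intro x hx
    rw [Finset.mem_product, Finset.mem_filter] at hx
    obtain ⟨⟨s, hs⟩, q⟩ := x
    have hq : Function.Injective q := hx.2.2
    have hp : Function.Injective (c s hs ∘ q) := (hinj s hs).comp hq
    have e : Finset.image (c s hs ∘ q) Finset.univ = s := by
      rw [← Finset.image_image,
        Finset.image_univ_of_surjective ((Finite.injective_iff_surjective).mp hq)]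
      exact image_c c hinj hmem s hs
    refine Prod.ext (Subtype.ext e) ?_
    funext i
    have h1 := c_qOf c hinj hmem (c s hs ∘ q) hp i
    rw [c_proof_irrel c e (card_image' _ hp) hs] at h1
    exact hinj s hs h1
  · -- values agree
    intro p hp
    have hpinj : Function.Injective p := by simpa using hp
    refine Finset.sum_congr rfl fun σ _ => ?_
    congr 1
    refine Finset.prod_congr rfl fun i _ => ?_
    rw [c_qOf c hinj hmem p hpinj i]
end CB

end CauchyBinet

lemma colsOf_injective (n : ℕ) (s : Finset (Fin n ⊕ Fin n)) (hs : s.card = n) :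
    Function.Injective (colsOf n s hs) := by
  intro a b h
  unfold colsOf at h
  have h2 := finSumFinEquiv.symm.injective h
  have h3 := Subtype.ext (α := Fin (n + n)) h2
  exact (Finset.orderIsoOfFin _ _).injective h3

lemma colsOf_mem (n : ℕ) (s : Finset (Fin n ⊕ Fin n)) (hs : s.card = n) (i : Fin n) :
    colsOf n s hs i ∈ s := by
  unfold colsOf
  have h := ((s.image finSumFinEquiv).orderIsoOfFin
    (by rw [Finset.card_image_of_injective _ finSumFinEquiv.injective, hs]) i).2
  obtain ⟨a, ha, he⟩ := Finset.mem_image.mp h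
  rw [← he, Equiv.symm_apply_apply]
  exact ha

lemma detCoord_Pl {n : ℕ} (g : Matrix (Fin n ⊕ Fin n) (Fin n ⊕ Fin n) ℝ)
    (s : Finset (Fin n ⊕ Fin n)) (hs : s.card = n) :
    detCoord ℝ n s hs (Pl ℝ n g) = ((Mrow g).submatrix id (colsOf n s hs)).det := by
  rw [Pl, detCoord, ExteriorAlgebra.liftAlternating_apply_ιMulti, dif_pos rfl]
  simp only [AlternatingMap.domDomCongr_apply, AlternatingMap.compLinearMap_apply,
    LinearMap.funLeft_apply]
  congr 1

lemma realWedgeNorm_Pl {n : ℕ} (g : Matrix (Fin n ⊕ Fin n) (Fin n ⊕ Fin n) ℝ) :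
    realWedgeNorm n (Pl ℝ n g) = Real.sqrt ((Mrow g * (Mrow g)ᵀ).det) := by
  rw [realWedgeNorm]
  congr 1
  rw [cauchy_binet (colsOf n) (colsOf_injective n) (colsOf_mem n) (Mrow g) ((Mrow g)ᵀ)]
  refine Finset.sum_congr rfl fun s _ => ?_
  rw [detCoord_Pl, sq]
  congr 1
  rw [← Matrix.det_transpose ((Mrow g).submatrix id (colsOf n s.1 s.2)),
    Matrix.transpose_submatrix]

/-- For `g, h ∈ Sp_{2n}(ℝ)` and `K = Sp_{2n}(ℝ) ∩ O_{2n}(ℝ)`: `‖Pl(g)‖ = ‖Pl(h)‖` iff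
`g = q·h·k` for some `q ∈ [P,P](ℝ)` and `k ∈ K`.  I.e., the map `X(ℝ)/K → ℝ_{>0}` sending
`[P,P](ℝ) g K ↦ ‖Pl(g)‖` is a well-defined injection. -/
theorem plNorm_eq_iff_same_double_coset_real (n : ℕ) (hn : 1 ≤ n)
    (g h : Matrix (Fin n ⊕ Fin n) (Fin n ⊕ Fin n) ℝ)
    (hg : g ∈ Sp ℝ n) (hh : h ∈ Sp ℝ n) :
    realWedgeNorm n (Pl ℝ n g) = realWedgeNorm n (Pl ℝ n h) ↔
      ∃ q ∈ SiegelPP ℝ n, ∃ k ∈ Sp ℝ n, k * kᵀ = 1 ∧ g = q * h * k := by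

  have hSg : (Mrow g * (Mrow g)ᵀ).PosDef := S_posdef hg
  have hSh : (Mrow h * (Mrow h)ᵀ).PosDef := S_posdef hh
  rw [realWedgeNorm_Pl, realWedgeNorm_Pl]
  constructor
  · intro heq
    have hdet : (Mrow g * (Mrow g)ᵀ).det = (Mrow h * (Mrow h)ᵀ).det :=
      (Real.sqrt_inj hSg.det_pos.le hSh.det_pos.le).mp heq
    obtain ⟨pg, kg, hpgSp, hpg21, hpgdet, hkgSp, hkgO, hgeq⟩ := iwasawa hg
    obtain ⟨ph, kh, hphSp, hph21, hphdet, hkhSp, hkhO, hheq⟩ := iwasawa hh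
    set Ag := pg.toBlocks₁₁ with hAgdef
    set Ah := ph.toBlocks₁₁ with hAhdef
    set Bh := ph.toBlocks₁₂ with hBhdef
    set Eh := ph.toBlocks₂₂ with hEhdef
    obtain ⟨hphform, hAEh⟩ := sp_siegel_form hphSp hph21
    have hEAh : Eh * Ahᵀ = 1 := by
      have := congrArg Matrix.transpose hAEh
      rwa [Matrix.transpose_mul, Matrix.transpose_transpose, Matrix.transpose_one] at this
    have hphform' : ph = Matrix.fromBlocks Ah Bh 0 Eh := by
      rw [← hph21, hAhdef, hBhdef, hEhdef, Matrix.fromBlocks_toBlocks]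
    set Q := Matrix.fromBlocks Ehᵀ (-(Ehᵀ * Bh * Ahᵀ)) 0 Ahᵀ with hQdef
    have hphQ : ph * Q = 1 := by
      have hTR : Ah * -(Ehᵀ * Bh * Ahᵀ) + Bh * Ahᵀ = 0 := by
        rw [Matrix.mul_neg]
        calc -(Ah * (Ehᵀ * Bh * Ahᵀ)) + Bh * Ahᵀ
            = -(Ah * Ehᵀ * (Bh * Ahᵀ)) + Bh * Ahᵀ := by simp only [Matrix.mul_assoc]
          _ = 0 := by rw [hAEh, Matrix.one_mul, neg_add_cancel]
      rw [hphform', hQdef, Matrix.fromBlocks_multiply]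
      have hAE' : Ah * Ehᵀ = 1 := hAEh
      simp only [Matrix.zero_mul, Matrix.mul_zero, add_zero, zero_add, hAEh, hEAh, hTR,
        Matrix.fromBlocks_one, hAE']
    have hQinv : ph⁻¹ = Q := Matrix.inv_eq_right_inv hphQ
    have hQph : Q * ph = 1 := by rw [← hQinv, Matrix.nonsing_inv_mul _ (Sp_isUnit_det hphSp)]
    set q := pg * Q with hqdef
    have hqSp : q ∈ Sp ℝ n := by
      rw [hqdef, ← hQinv]
      exact Sp_mul hpgSp (Sp_inv hphSp)
    obtain ⟨hpgform, hAEg⟩ := sp_siegel_form hpgSp hpg21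
    have hq_blocks : q = Matrix.fromBlocks (Ag * Ehᵀ)
        (Ag * -(Ehᵀ * Bh * Ahᵀ) + pg.toBlocks₁₂ * Ahᵀ) 0 (pg.toBlocks₁₁ᵀ⁻¹ * Ahᵀ) := by
      rw [hqdef]
      conv_lhs => rw [hpgform]
      rw [hQdef, Matrix.fromBlocks_multiply]
      simp only [Matrix.zero_mul, Matrix.mul_zero, add_zero, zero_add]
      rfl
    have hq21 : q.toBlocks₂₁ = 0 := by rw [hq_blocks, Matrix.toBlocks_fromBlocks₂₁]
    have hq11 : q.toBlocks₁₁ = Ag * Ehᵀ := by rw [hq_blocks, Matrix.toBlocks_fromBlocks₁₁]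
    have hsqrtg_pos : 0 < Real.sqrt (Mrow g * (Mrow g)ᵀ).det := Real.sqrt_pos.mpr hSg.det_pos
    have hsqrth_pos : 0 < Real.sqrt (Mrow h * (Mrow h)ᵀ).det := Real.sqrt_pos.mpr hSh.det_pos
    have hdetEh : Ehᵀ.det = Real.sqrt (Mrow h * (Mrow h)ᵀ).det := by
      have h1 := congrArg Matrix.det hAEh
      rw [Matrix.det_mul, Matrix.det_one, hphdet] at h1
      rw [inv_mul_eq_iff_eq_mul₀ hsqrth_pos.ne', mul_one] at h1
      exact h1
    have hqdet : q.toBlocks₁₁.det = 1 := by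
      rw [hq11, Matrix.det_mul, hpgdet, hdetEh, hdet]
      field_simp
    refine ⟨q, mem_SiegelPP_of hqSp hq21 hqdet, khᵀ * kg, ?_, ?_, ?_⟩
    · have hkhinv : kh⁻¹ = khᵀ := Matrix.inv_eq_right_inv hkhO
      exact Sp_mul (hkhinv ▸ Sp_inv hkhSp) hkgSp
    · rw [Matrix.transpose_mul, Matrix.transpose_transpose]
      calc khᵀ * kg * (kgᵀ * kh) = khᵀ * (kg * kgᵀ) * kh := by simp only [Matrix.mul_assoc]
        _ = 1 := by rw [hkgO, Matrix.mul_one, mul_eq_one_comm.mp hkhO]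
    · rw [hheq, hqdef]
      simp only [Matrix.mul_assoc]
      rw [← Matrix.mul_assoc kh khᵀ, hkhO, Matrix.one_mul, ← Matrix.mul_assoc Q ph, hQph,
        Matrix.one_mul]
      exact hgeq
  · rintro ⟨q, ⟨hqSp, A, B, hqform, hAdet⟩, k, hkSp, hkO, hgqhk⟩
    rw [hgqhk]
    congr 1
    have hMrow : Mrow (q * h * k) = Aᵀ⁻¹ * (Mrow h * k) := by
      rw [Matrix.mul_assoc, hqform, Mrow_fromBlocks_mul, Mrow_mul]
    rw [hMrow]
    have key : Aᵀ⁻¹ * (Mrow h * k) * (Aᵀ⁻¹ * (Mrow h * k))ᵀ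
        = Aᵀ⁻¹ * (Mrow h * (Mrow h)ᵀ) * (Aᵀ⁻¹)ᵀ := by
      rw [Matrix.transpose_mul, Matrix.transpose_mul]
      simp only [Matrix.mul_assoc]
      rw [← Matrix.mul_assoc k kᵀ, hkO, Matrix.one_mul]
    rw [key, Matrix.det_mul, Matrix.det_mul, Matrix.det_transpose, Matrix.det_nonsing_inv,
      Matrix.det_transpose, hAdet]
    simp [Ring.inverse_eq_inv]
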